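/- If a > 0 is irrational, then the function x ↦ cos(a·arccos x) is not algebraic: the only polynomial P in two variables with real coefficients satisfying P(x, cos(a·arccos x)) = 0 for all x ∈ [−1, 1] is the zero polynomial. -/

import Mathlib

open Filter Real MvPolynomial

theorem stmt8 (a : ℝ) (ha : 0 < a) (hirr : Irrational a) :
    ∀ P : MvPolynomial (Fin 2) ℝ,
      (∀ x ∈ Set.Icc (-1 : ℝ) 1,
        MvPolynomial.eval ![x, Real.cos (a * Real.arccos x)] P = 0) → P = 0 := by
  intro P hP
  by_contra hP0
  set μ : (Fin 2 →₀ ℕ) → ℝ := fun d => (d 0 : ℝ) + a * (d 1 : ℝ) with hμ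
  -- μ is injective (irrationality of a)
  have hμinj : ∀ d e : Fin 2 →₀ ℕ, μ d = μ e → d = e := by
    intro d e h
    simp only [hμ] at h
    by_cases h1 : d 1 = e 1
    · have h0 : d 0 = e 0 := by
        have : (d 0 : ℝ) = e 0 := by rw [h1] at h; linarith
        exact_mod_cast this
      ext i
      fin_cases i
      · exact h0
      · exact h1
    · exfalso
      have hne : ((d 1 : ℝ)) - (e 1 : ℝ) ≠ 0 :=
        sub_ne_zero.mpr (by exact_mod_cast h1)
      apply hirr
      refine ⟨((e 0 : ℚ) - (d 0 : ℚ)) / ((d 1 : ℚ) - (e 1 : ℚ)), ?_⟩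
      push_cast
      rw [div_eq_iff hne]
      linarith
  obtain ⟨dm, hdm, hmax⟩ := Finset.exists_max_image P.support μ (support_nonempty.mpr hP0)
  have hc : P.coeff dm ≠ 0 := mem_support_iff.mp hdm
  -- the complex function
  set g : ℂ → ℂ :=
    fun z => eval₂ (algebraMap ℝ ℂ) ![Complex.cos z, Complex.cos ((a : ℂ) * z)] P with hg
  have hgsum : ∀ z, g z = ∑ d ∈ P.support,
      ((P.coeff d : ℝ) : ℂ) * Complex.cos z ^ (d 0) * Complex.cos ((a : ℂ) * z) ^ (d 1) := by
    intro z
    simp only [hg]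
    rw [eval₂_eq']
    refine Finset.sum_congr rfl fun d _ => ?_
    rw [Fin.prod_univ_two]
    simp only [Matrix.cons_val_zero, Matrix.cons_val_one, Matrix.head_cons,
      Complex.coe_algebraMap]
    ring
  have hdiff : Differentiable ℂ g := by
    have hfe : g = fun z => ∑ d ∈ P.support,
        ((P.coeff d : ℝ) : ℂ) * Complex.cos z ^ (d 0) * Complex.cos ((a : ℂ) * z) ^ (d 1) :=
      funext hgsum
    rw [hfe]
    apply Differentiable.fun_sum
    intro d _
    apply Differentiable.mul
    apply Differentiable.mul
    · exact differentiable_const _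
    · exact Complex.differentiable_cos.pow _
    · exact (Complex.differentiable_cos.comp ((differentiable_const _).mul differentiable_id)).pow _
  have hA : AnalyticOnNhd ℂ g Set.univ :=
    hdiff.differentiableOn.analyticOnNhd isOpen_univ
  -- g vanishes on real [0, π]
  have hg0 : ∀ θ : ℝ, θ ∈ Set.Icc 0 π → g (θ : ℂ) = 0 := by
    intro θ hθ
    have hx : Real.cos θ ∈ Set.Icc (-1 : ℝ) 1 := ⟨Real.neg_one_le_cos θ, Real.cos_le_one θ⟩
    have h1 := hP _ hx
    rw [Real.arccos_cos hθ.1 hθ.2] at h1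
    rw [eval_eq'] at h1
    have h1' : (∑ d ∈ P.support,
        P.coeff d * Real.cos θ ^ (d 0) * Real.cos (a * θ) ^ (d 1)) = 0 := by
      rw [← h1]
      refine Finset.sum_congr rfl fun d _ => ?_
      rw [Fin.prod_univ_two]
      simp only [Matrix.cons_val_zero, Matrix.cons_val_one, Matrix.head_cons]
      ring
    rw [hgsum]
    have key : ∀ d : Fin 2 →₀ ℕ,
        ((P.coeff d : ℝ) : ℂ) * Complex.cos (θ : ℂ) ^ (d 0) * Complex.cos ((a : ℂ) * θ) ^ (d 1)
          = ((P.coeff d * Real.cos θ ^ (d 0) * Real.cos (a * θ) ^ (d 1) : ℝ) : ℂ) := by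
      intro d
      push_cast
      ring
    simp only [key]
    rw [← Complex.ofReal_sum, h1', Complex.ofReal_zero]
  -- identity theorem: g vanishes everywhere
  have hEq : Set.EqOn g 0 Set.univ := by
    apply hA.eqOn_zero_of_preconnected_of_frequently_eq_zero isPreconnected_univ
      (Set.mem_univ ((π / 2 : ℝ) : ℂ))
    have hmem : ∀ n : ℕ, (π / 2 + 1 / (n + 1) : ℝ) ∈ Set.Icc 0 π := by
      intro n
      have hpos : (0 : ℝ) < 1 / (n + 1 : ℝ) := by positivity
      have hle : (1 : ℝ) / (n + 1 : ℝ) ≤ 1 := by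
        rw [div_le_one (by positivity)]
        linarith [Nat.cast_nonneg (α := ℝ) n]
      have hπ : (3 : ℝ) < π := Real.pi_gt_three
      constructor <;> nlinarith
    have htend : Tendsto (fun n : ℕ => ((π / 2 + 1 / (n + 1) : ℝ) : ℂ)) atTop
        (nhdsWithin ((π / 2 : ℝ) : ℂ) {((π / 2 : ℝ) : ℂ)}ᶜ) := by
      rw [tendsto_nhdsWithin_iff]
      constructor
      · have h1 : Tendsto (fun n : ℕ => (π / 2 + 1 / (n + 1) : ℝ)) atTop (nhds (π / 2)) := by
          have := tendsto_one_div_add_atTop_nhds_zero_nat (𝕜 := ℝ)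
          simpa using tendsto_const_nhds.add this
        exact ((Complex.continuous_ofReal.tendsto _).comp h1)
      · filter_upwards with n
        simp only [Set.mem_compl_iff, Set.mem_singleton_iff]
        intro hcontr
        have h2 : (π / 2 + 1 / (n + 1) : ℝ) = π / 2 := by exact_mod_cast hcontr
        have hpos : (0 : ℝ) < 1 / (n + 1 : ℝ) := by positivity
        linarith
    apply htend.frequently
    apply Filter.Eventually.frequently
    filter_upwards with n
    exact hg0 _ (hmem n)
  -- evaluate at it : P(cosh t, cosh at) = 0
  have hS : ∀ t : ℝ, (∑ d ∈ P.support,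
      P.coeff d * Real.cosh t ^ (d 0) * Real.cosh (a * t) ^ (d 1)) = 0 := by
    intro t
    have h0 : g ((t : ℂ) * Complex.I) = 0 := hEq (Set.mem_univ _)
    rw [hgsum] at h0
    have e1 : Complex.cos ((t : ℂ) * Complex.I) = ((Real.cosh t : ℝ) : ℂ) := by
      rw [Complex.cos_mul_I, Complex.ofReal_cosh]
    have e2 : Complex.cos ((a : ℂ) * ((t : ℂ) * Complex.I)) = ((Real.cosh (a * t) : ℝ) : ℂ) := by
      rw [show (a : ℂ) * ((t : ℂ) * Complex.I) = ((a * t : ℝ) : ℂ) * Complex.I by push_cast; ring,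
        Complex.cos_mul_I, Complex.ofReal_cosh]
    rw [show ((0 : ℂ)) = (((0 : ℝ)) : ℂ) by norm_num] at h0
    simp only [e1, e2] at h0
    exact_mod_cast h0
  -- asymptotics
  have hcosh : Tendsto (fun t : ℝ => Real.cosh t / Real.exp t) atTop (nhds (1 / 2)) := by
    have heq : ∀ t : ℝ, Real.cosh t / Real.exp t = (1 + Real.exp (-2 * t)) / 2 := by
      intro t
      have h2 : Real.exp (-(2 * t)) * Real.exp t = Real.exp (-t) := by
        rw [← Real.exp_add]; ring_nf
      have h3 : Real.exp t ≠ 0 := Real.exp_ne_zero t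
      rw [Real.cosh_eq]
      field_simp
      rw [show t * 2 = 2 * t by ring]
      linarith
    simp only [heq]
    have h0 : Tendsto (fun t : ℝ => Real.exp (-2 * t)) atTop (nhds 0) :=
      Real.tendsto_exp_atBot.comp (tendsto_id.const_mul_atTop_of_neg (by norm_num))
    simpa using (h0.const_add 1).div_const 2
  have hcosh2 : Tendsto (fun t : ℝ => Real.cosh (a * t) / Real.exp (a * t)) atTop
      (nhds (1 / 2)) :=
    hcosh.comp (tendsto_id.const_mul_atTop ha)
  set F : (Fin 2 →₀ ℕ) → ℝ → ℝ := fun d t =>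
    P.coeff d * (Real.cosh t / Real.exp t) ^ (d 0) * (Real.cosh (a * t) / Real.exp (a * t)) ^ (d 1)
      * Real.exp ((μ d - μ dm) * t) with hF
  have hFsum : ∀ t : ℝ, (∑ d ∈ P.support, F d t) = 0 := by
    intro t
    have hexp : ∀ ν : Fin 2 →₀ ℕ,
        Real.exp (μ ν * t) = Real.exp t ^ (ν 0) * Real.exp (a * t) ^ (ν 1) := by
      intro ν
      rw [← Real.exp_nat_mul, ← Real.exp_nat_mul, ← Real.exp_add]
      congr 1
      simp only [hμ]
      ring
    have hsum : (∑ d ∈ P.support, F d t) = (∑ d ∈ P.support,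
        P.coeff d * Real.cosh t ^ (d 0) * Real.cosh (a * t) ^ (d 1)) / Real.exp (μ dm * t) := by
      rw [Finset.sum_div]
      refine Finset.sum_congr rfl fun d _ => ?_
      simp only [hF]
      rw [show (μ d - μ dm) * t = μ d * t - μ dm * t by ring, Real.exp_sub, hexp d, hexp dm,
        div_pow, div_pow]
      have h1 : Real.exp t ≠ 0 := Real.exp_ne_zero t
      have h2 : Real.exp (a * t) ≠ 0 := Real.exp_ne_zero (a * t)
      field_simp
    rw [hsum, hS t, zero_div]
  have hFlim : ∀ d ∈ P.support, Tendsto (F d) atTop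
      (nhds (P.coeff d * (1 / 2 : ℝ) ^ (d 0) * (1 / 2 : ℝ) ^ (d 1) *
        (if d = dm then 1 else 0))) := by
    intro d hd
    apply Tendsto.mul
    · exact (tendsto_const_nhds.mul (hcosh.pow _)).mul (hcosh2.pow _)
    · by_cases hde : d = dm
      · rw [if_pos hde, hde]
        simp only [sub_self, zero_mul, Real.exp_zero]
        exact tendsto_const_nhds
      · rw [if_neg hde]
        have hlt : μ d - μ dm < 0 :=
          sub_neg.mpr (lt_of_le_of_ne (hmax d hd) (fun h => hde (hμinj d dm h)))
        exact Real.tendsto_exp_atBot.comp (tendsto_id.const_mul_atTop_of_neg hlt)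
  have hlim0 : Tendsto (fun t => ∑ d ∈ P.support, F d t) atTop
      (nhds (∑ d ∈ P.support, P.coeff d * (1 / 2 : ℝ) ^ (d 0) * (1 / 2 : ℝ) ^ (d 1) *
        (if d = dm then 1 else 0))) := tendsto_finset_sum _ hFlim
  have hzero : Tendsto (fun t => ∑ d ∈ P.support, F d t) atTop (nhds 0) := by
    simp only [hFsum]
    exact tendsto_const_nhds
  have hfin := tendsto_nhds_unique hlim0 hzero
  rw [Finset.sum_congr rfl (fun d _ => by rw [mul_ite, mul_one, mul_zero])] at hfin
  rw [Finset.sum_ite_eq' P.support dm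
    (fun d => P.coeff d * (1 / 2 : ℝ) ^ (d 0) * (1 / 2 : ℝ) ^ (d 1)), if_pos hdm] at hfin
  have h12 : ((1 : ℝ) / 2) ^ (dm 0) ≠ 0 := by positivity
  have h12' : ((1 : ℝ) / 2) ^ (dm 1) ≠ 0 := by positivity
  rcases mul_eq_zero.mp hfin with h | h
  · rcases mul_eq_zero.mp h with h' | h'
    · exact hc h'
    · exact h12 h'
  · exact h12' h
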